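/- Let g : ℝ → ℝ be continuously differentiable with g'(x) > 0 for all x, lim_{x→−∞} g(x) = 0, lim_{x→+∞} g(x) = 1, g(x) + g(−x) = 1 for all real x, and lim_{x→−∞} g'(x) = 0; let g⁻¹ : (0,1) → ℝ be the inverse of g. Then for every M > 0 there exists p₀ ∈ (0,1) such that for every p ∈ (0, p₀) there exists q ∈ (0,1) for which the absolute value of the derivative of the map r ↦ g( g⁻¹(r) + g⁻¹(q) ) at r = p is strictly greater than M. -/

import Mathlib

open Filter Set

/-- Analogue of Theorem 2.5 for `p_ik` near `0`: for any `M > 0` the probability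
`p_ij = g(g⁻¹(p_ik) + g⁻¹(p_kj))` is `M`-sensitive to `p_ik` whenever `p_ik` is
sufficiently small, for a suitable choice of `p_kj`. -/
theorem stmt_5 (g ginv : ℝ → ℝ)
    (hC1 : ContDiff ℝ 1 g) (hpos : ∀ x : ℝ, 0 < deriv g x)
    (hbot : Tendsto g atBot (nhds 0)) (htop : Tendsto g atTop (nhds 1))
    (hsymm : ∀ x : ℝ, g x + g (-x) = 1)
    (hderiv0 : Tendsto (deriv g) atBot (nhds 0))
    (hleft : ∀ x : ℝ, ginv (g x) = x)
    (hright : ∀ y ∈ Ioo (0 : ℝ) 1, g (ginv y) = y) :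
    ∀ M > (0 : ℝ), ∃ p₀ ∈ Ioo (0 : ℝ) 1, ∀ p ∈ Ioo (0 : ℝ) p₀, ∃ q ∈ Ioo (0 : ℝ) 1,
      |deriv (fun r : ℝ => g (ginv r + ginv q)) p| > M := by
  intro M hM
  have hmono : StrictMono g := strictMono_of_deriv_pos hpos
  have hdiff : Differentiable ℝ g := hC1.differentiable one_ne_zero
  have hIoo : ∀ x : ℝ, g x ∈ Ioo (0 : ℝ) 1 := by
    intro x
    constructor
    · have h1 : 0 ≤ g (x - 1) :=
        le_of_tendsto hbot (eventually_atBot.2 ⟨x - 1, fun y hy => hmono.le_iff_le.2 hy⟩)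
      exact lt_of_le_of_lt h1 (hmono (by linarith))
    · have h1 : g (x + 1) ≤ 1 :=
        ge_of_tendsto htop (eventually_atTop.2 ⟨x + 1, fun y hy => hmono.le_iff_le.2 hy⟩)
      exact lt_of_lt_of_le (hmono (by linarith)) h1
  have hg0 : 0 < deriv g 0 := hpos 0
  have hMd : 0 < deriv g 0 / M := div_pos hg0 hM
  have hev : ∀ᶠ x in atBot, deriv g x < deriv g 0 / M := hderiv0.eventually_lt_const hMd
  obtain ⟨B, hB⟩ := eventually_atBot.1 hev
  refine ⟨g B, hIoo B, ?_⟩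
  intro p hp
  have hp1 : p ∈ Ioo (0 : ℝ) 1 := ⟨hp.1, hp.2.trans (hIoo B).2⟩
  set x₀ := ginv p with hx0
  have hgx0 : g x₀ = p := hright p hp1
  have hx0B : x₀ < B := hmono.lt_iff_lt.1 (by rw [hgx0]; exact hp.2)
  have hdx0 : deriv g x₀ < deriv g 0 / M := hB x₀ hx0B.le
  -- continuity of ginv at p
  have hcont : ContinuousAt ginv p := by
    rw [ContinuousAt, Metric.tendsto_nhds]
    intro ε hε
    have hopen : Ioo (g (x₀ - ε)) (g (x₀ + ε)) ∈ nhds p := by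
      apply Ioo_mem_nhds
      · rw [← hgx0]; exact hmono (by linarith)
      · rw [← hgx0]; exact hmono (by linarith)
    filter_upwards [hopen] with y hy
    have hy01 : y ∈ Ioo (0 : ℝ) 1 := ⟨(hIoo _).1.trans hy.1, hy.2.trans (hIoo _).2⟩
    have l1 : x₀ - ε < ginv y := hmono.lt_iff_lt.1 (by rw [hright y hy01]; exact hy.1)
    have l2 : ginv y < x₀ + ε := hmono.lt_iff_lt.1 (by rw [hright y hy01]; exact hy.2)
    rw [Real.dist_eq, abs_lt]
    constructor <;> simp only [← hx0] <;> linarith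
  have hder_ne : deriv g x₀ ≠ 0 := (hpos x₀).ne'
  have hfg : ∀ᶠ y in nhds p, g (ginv y) = y := by
    filter_upwards [Ioo_mem_nhds hp1.1 hp1.2] with y hy using hright y hy
  have hI : HasDerivAt ginv (deriv g x₀)⁻¹ p :=
    HasDerivAt.of_local_left_inverse hcont ((hdiff x₀).hasDerivAt) hder_ne hfg
  refine ⟨g (-x₀), hIoo _, ?_⟩
  have hq : ginv (g (-x₀)) = -x₀ := hleft _
  have hsum : HasDerivAt (fun r => ginv r + ginv (g (-x₀))) (deriv g x₀)⁻¹ p := hI.add_const _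
  have hval : ginv p + ginv (g (-x₀)) = 0 := by rw [hq, ← hx0]; ring
  have hg0' : HasDerivAt g (deriv g 0) (ginv p + ginv (g (-x₀))) := by
    rw [hval]; exact (hdiff 0).hasDerivAt
  have hcomp := hg0'.comp p hsum
  have hd : deriv (fun r : ℝ => g (ginv r + ginv (g (-x₀)))) p
      = deriv g 0 * (deriv g x₀)⁻¹ := by
    have := hcomp.deriv
    simpa [Function.comp_def] using this
  rw [hd, abs_of_pos (mul_pos hg0 (inv_pos.2 (hpos x₀)))]
  rw [gt_iff_lt, ← div_eq_mul_inv, lt_div_iff₀ (hpos x₀)]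
  have := (lt_div_iff₀ hM).1 hdx0
  nlinarith [hpos x₀]
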